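/- Let d ≥ 2 and let U be a real d×d special orthogonal matrix (UᵀU = I and det U = 1). Then there exists a family of angles θ = (θ_{i,j})_{1≤i<j≤d} with 0 ≤ θ_{1,j} < 2π for all j > 1 and 0 ≤ θ_{i,j} < π for all i ≠ 1, such that U = U(θ), where U(θ) is the ordered product of Givens rotations U(θ) = Q^{d−1}(θ)·Q^{d−2}(θ)···Q^1(θ). -/

import Mathlib

open Matrix Real

/-- The `d×d` Givens rotation matrix `Q_{i,j}(θ)`: the identity matrix with entries
`(i,i)` and `(j,j)` replaced by `cos θ`, entry `(i,j)` replaced by `sin θ`, and entry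
`(j,i)` replaced by `−sin θ`. -/
noncomputable def givens (d : ℕ) (i j : Fin d) (θ : ℝ) : Matrix (Fin d) (Fin d) ℝ :=
  Matrix.of fun k l =>
    if k = i ∧ l = i then Real.cos θ
    else if k = j ∧ l = j then Real.cos θ
    else if k = i ∧ l = j then Real.sin θ
    else if k = j ∧ l = i then -Real.sin θ
    else if k = l then 1 else 0

/-- `Q^k(θ) = Q_{k,d}(θ_{k,d}) · Q_{k,d−1}(θ_{k,d−1}) ··· Q_{k,k+1}(θ_{k,k+1})`
(indices `0,…,d−1` here play the role of the paper's `1,…,d`):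
the ordered product of the Givens rotations in row `k`, with the column index
decreasing from left to right. -/
noncomputable def Qmat (d : ℕ) (θ : Fin d → Fin d → ℝ) (k : Fin d) :
    Matrix (Fin d) (Fin d) ℝ :=
  ((((List.finRange d).filter (fun j => k < j)).reverse).map
    (fun j => givens d k j (θ k j))).prod

/-- `U(θ) = Q^{d−1}(θ) · Q^{d−2}(θ) ··· Q^1(θ)` (in the 0-indexed convention,
`Q^{d-1} ··· Q^0`, where the extra leftmost factor is the empty product `I`). -/
noncomputable def Umat (d : ℕ) (θ : Fin d → Fin d → ℝ) : Matrix (Fin d) (Fin d) ℝ :=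
  (((List.finRange d).reverse).map (fun k => Qmat d θ k)).prod

/-- Membership in the parameter set `Θ`: a family of angles `θ = (θ_{i,j})_{i<j}`
(encoded as a function on all pairs, set to `0` on irrelevant pairs `i ≥ j`)
with `0 ≤ θ_{1,j} < 2π` for the first row and `0 ≤ θ_{i,j} < π` otherwise. -/
def memTheta (d : ℕ) (θ : Fin d → Fin d → ℝ) : Prop :=
  ∀ i j : Fin d,
    (i < j → 0 ≤ θ i j ∧
      (if (i : ℕ) = 0 then θ i j < 2 * Real.pi else θ i j < Real.pi)) ∧
    (¬ i < j → θ i j = 0)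

namespace GA

variable {d : ℕ}

abbrev M (d : ℕ) := Matrix (Fin d) (Fin d) ℝ

lemma givens_apply (i j : Fin d) (θ : ℝ) (a b : Fin d) :
    givens d i j θ a b =
    if a = i ∧ b = i then Real.cos θ
    else if a = j ∧ b = j then Real.cos θ
    else if a = i ∧ b = j then Real.sin θ
    else if a = j ∧ b = i then -Real.sin θ
    else if a = b then 1 else 0 := rfl

lemma givens_row_ne (i j : Fin d) (θ : ℝ) (a b : Fin d) (ha1 : a ≠ i) (ha2 : a ≠ j) :
    givens d i j θ a b = (1 : M d) a b := by
  rw [givens_apply, Matrix.one_apply]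
  simp [ha1, ha2]

lemma givens_col_ne (i j : Fin d) (θ : ℝ) (a b : Fin d) (hb1 : b ≠ i) (hb2 : b ≠ j) :
    givens d i j θ a b = (1 : M d) a b := by
  rw [givens_apply, Matrix.one_apply]
  simp [hb1, hb2]

lemma givens_col_i (i j : Fin d) (hij : i ≠ j) (θ : ℝ) (c : Fin d) :
    givens d i j θ c i = Real.cos θ * (if c = i then 1 else 0)
      + (-Real.sin θ) * (if c = j then 1 else 0) := by
  rw [givens_apply]
  rcases eq_or_ne c i with rfl | hci
  · simp [hij.symm, hij]
  · rcases eq_or_ne c j with rfl | hcj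
    · simp [hij.symm, hij, hci]
    · simp [hci, hcj, hij.symm]

lemma givens_col_j (i j : Fin d) (hij : i ≠ j) (θ : ℝ) (c : Fin d) :
    givens d i j θ c j = Real.sin θ * (if c = i then 1 else 0)
      + Real.cos θ * (if c = j then 1 else 0) := by
  rw [givens_apply]
  rcases eq_or_ne c i with rfl | hci
  · simp [hij, hij.symm]
  · rcases eq_or_ne c j with rfl | hcj
    · simp [hij, hij.symm, hci]
    · simp [hci, hcj, hij]


/-- Key lemma: right multiplication by a Givens rotation. -/
lemma mul_givens_apply (A : M d) (i j : Fin d) (hij : i ≠ j) (θ : ℝ) (a b : Fin d) :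
    (A * givens d i j θ) a b =
      if b = i then Real.cos θ * A a i - Real.sin θ * A a j
      else if b = j then Real.sin θ * A a i + Real.cos θ * A a j
      else A a b := by
  rw [Matrix.mul_apply]
  by_cases hbi : b = i
  · rw [if_pos hbi, hbi]
    rw [Finset.sum_congr rfl (fun c _ => by rw [givens_col_i i j hij θ c])]
    simp only [mul_add, Finset.sum_add_distrib, mul_ite, mul_one, mul_zero,
      Finset.sum_ite_eq', Finset.mem_univ, if_pos]
    ring
  · by_cases hbj : b = j
    · rw [if_neg hbi, if_pos hbj, hbj]
      rw [Finset.sum_congr rfl (fun c _ => by rw [givens_col_j i j hij θ c])]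
      simp only [mul_add, Finset.sum_add_distrib, mul_ite, mul_one, mul_zero,
        Finset.sum_ite_eq', Finset.mem_univ, if_pos]
      ring
    · rw [if_neg hbi, if_neg hbj]
      rw [Finset.sum_congr rfl (fun c _ => by
        rw [givens_col_ne i j θ c b hbi hbj, Matrix.one_apply])]
      simp only [mul_ite, mul_one, mul_zero, Finset.sum_ite_eq', Finset.mem_univ, if_pos]

lemma givens_mul_givens (i j : Fin d) (hij : i ≠ j) (α β : ℝ) :
    givens d i j α * givens d i j β = givens d i j (α + β) := by
  ext a b
  rw [mul_givens_apply _ i j hij]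
  simp only [givens_apply]
  by_cases hbi : b = i <;> by_cases hbj : b = j <;> by_cases hai : a = i <;>
    by_cases haj : a = j <;>
    simp_all [Real.cos_add, Real.sin_add, eq_comm] <;> ring

lemma givens_zero (i j : Fin d) (hij : i ≠ j) : givens d i j 0 = 1 := by
  ext a b
  rw [givens_apply, Matrix.one_apply]
  by_cases hbi : b = i <;> by_cases hbj : b = j <;> by_cases hai : a = i <;>
    by_cases haj : a = j <;>
    simp_all

lemma givens_neg_mul (i j : Fin d) (hij : i ≠ j) (θ : ℝ) :
    givens d i j (-θ) * givens d i j θ = 1 := by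
  rw [givens_mul_givens i j hij, neg_add_cancel, givens_zero i j hij]

lemma givens_mul_neg (i j : Fin d) (hij : i ≠ j) (θ : ℝ) :
    givens d i j θ * givens d i j (-θ) = 1 := by
  rw [givens_mul_givens i j hij, add_neg_cancel, givens_zero i j hij]

lemma givens_transpose (i j : Fin d) (hij : i ≠ j) (θ : ℝ) :
    (givens d i j θ)ᵀ = givens d i j (-θ) := by
  ext a b
  rw [Matrix.transpose_apply, givens_apply, givens_apply]
  by_cases hbi : b = i <;> by_cases hbj : b = j <;> by_cases hai : a = i <;>
    by_cases haj : a = j <;>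
    simp_all [Real.cos_neg, Real.sin_neg, eq_comm]

lemma givens_det (i j : Fin d) (hij : i ≠ j) (θ : ℝ) : (givens d i j θ).det = 1 := by
  have h2 : givens d i j θ = givens d i j (θ/2) * givens d i j (θ/2) := by
    rw [givens_mul_givens i j hij]; ring_nf
  have ht : (givens d i j θ).det * (givens d i j (-θ)).det = 1 := by
    rw [← Matrix.det_mul, givens_mul_neg i j hij, Matrix.det_one]
  have htr : (givens d i j (-θ)).det = (givens d i j θ).det := by
    rw [← givens_transpose i j hij, Matrix.det_transpose]
  have hsq : (0:ℝ) ≤ (givens d i j θ).det := by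
    rw [h2, Matrix.det_mul]; exact mul_self_nonneg _
  nlinarith [ht, htr, hsq]

/-! ### products over decreasing ranges -/

noncomputable def g (k : Fin d) (η : ℕ → ℝ) (m : ℕ) : M d :=
  if h : m < d then givens d k ⟨m, h⟩ (η m) else 1

noncomputable def dprod (f : ℕ → M d) (a b : ℕ) : M d :=
  ((List.range' a (b - a)).reverse.map f).prod

lemma dprod_self (f : ℕ → M d) (a b : ℕ) (h : b ≤ a) : dprod f a b = 1 := by
  unfold dprod
  rw [Nat.sub_eq_zero_of_le h]
  simp

lemma dprod_lo (f : ℕ → M d) (a b : ℕ) (h : a < b) :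
    dprod f a b = dprod f (a+1) b * f a := by
  unfold dprod
  have h1 : b - a = (b - (a+1)) + 1 := by omega
  rw [h1, List.range'_succ]
  simp

lemma dprod_congr (f f' : ℕ → M d) (a b : ℕ) (h : ∀ m, a ≤ m → m < b → f m = f' m) :
    dprod f a b = dprod f' a b := by
  unfold dprod
  congr 1
  apply List.map_congr_left
  intro m hm
  rw [List.mem_reverse, List.mem_range'_1] at hm
  exact h m hm.1 (by omega)

lemma mem_range'_lt {a n m : ℕ} (h : m ∈ List.range' a n) : a ≤ m ∧ m < a + n :=
  List.mem_range'_1.mp h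

/-! ### translating `Qmat`/`Umat` -/

noncomputable def rowη (θ : Fin d → Fin d → ℝ) (k : Fin d) : ℕ → ℝ :=
  fun m => if h : m < d then θ k ⟨m, h⟩ else 0

lemma filter_val (k : Fin d) (l : List (Fin d)) :
    (l.filter (fun j => decide (k < j))).map Fin.val
      = (l.map Fin.val).filter (fun m => decide (k.val < m)) := by
  induction l with
  | nil => simp
  | cons j t ih =>
    by_cases h : k < j
    · have h' : k.val < j.val := h
      simp [List.filter_cons, h, h', ih]
    · have h' : ¬ k.val < j.val := h
      simp [List.filter_cons, h, h', ih]

lemma nat_filter_range (k d' : ℕ) :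
    (List.range d').filter (fun m => decide (k < m)) = List.range' (k+1) (d' - (k+1)) := by
  induction d' with
  | zero => simp
  | succ n ih =>
    rw [List.range_succ, List.filter_append, ih]
    by_cases h : k < n
    · have h1 : n - (k+1) + 1 = n + 1 - (k + 1) := by omega
      have h2 : n = (k+1) + (n - (k+1)) := by omega
      simp only [List.filter_cons, List.filter_nil, decide_eq_true_eq, h, if_pos]
      rw [← h1]
      have h3 : (k+1) + (n - (k+1)) = n := by omega
      rw [List.range'_1_concat, h3]
    · have h1 : n + 1 - (k+1) = 0 := by omega
      have h2 : n - (k+1) = 0 := by omega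
      simp [h, h1, h2]

lemma finRange_map_val (d' : ℕ) : (List.finRange d').map Fin.val = List.range d' :=
  List.ext_getElem (by simp) (fun i h1 h2 => by simp)

lemma Qmat_eq (θ : Fin d → Fin d → ℝ) (k : Fin d) :
    Qmat d θ k = dprod (g k (rowη θ k)) (k.val + 1) d := by
  unfold Qmat dprod
  have hl : (((List.finRange d).filter (fun j => decide (k < j))).reverse).map
      (fun j => givens d k j (θ k j))
      = (((List.finRange d).filter (fun j => decide (k < j))).reverse).map
        ((g k (rowη θ k)) ∘ Fin.val) := by
    apply List.map_congr_left
    intro j _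
    simp only [Function.comp, g, rowη, j.isLt, dif_pos, Fin.eta]
  rw [hl, ← List.map_map, List.map_reverse, filter_val, finRange_map_val, nat_filter_range]

lemma Umat_eq (θ : Fin d → Fin d → ℝ) :
    Umat d θ = dprod (fun m => if h : m < d then Qmat d θ ⟨m, h⟩ else 1) 0 d := by
  unfold Umat dprod
  have hl : ((List.finRange d).reverse).map (fun k => Qmat d θ k)
      = ((List.finRange d).reverse).map
        ((fun m => if h : m < d then Qmat d θ ⟨m, h⟩ else 1) ∘ Fin.val) := by
    apply List.map_congr_left
    intro j _
    simp only [Function.comp, j.isLt, dif_pos, Fin.eta]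
  rw [hl, ← List.map_map, List.map_reverse, finRange_map_val, List.range_eq_range',
    Nat.sub_zero]

/-! ### FixBelow -/

def FixBelow (V : M d) (k : ℕ) : Prop :=
  ∀ a b : Fin d, a.val < k ∨ b.val < k → V a b = (1 : M d) a b

lemma fixBelow_one (k : ℕ) : FixBelow (1 : M d) k := fun _ _ _ => rfl

lemma fixBelow_mul {A B : M d} {k : ℕ} (hA : FixBelow A k) (hB : FixBelow B k) :
    FixBelow (A * B) k := by
  intro a b hab
  rw [Matrix.mul_apply]
  rcases hab with ha | hb
  · rw [Finset.sum_congr rfl (fun c _ => by rw [hA a c (Or.inl ha)])]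
    simp only [Matrix.one_apply, ite_mul, one_mul, zero_mul, Finset.sum_ite_eq,
      Finset.mem_univ, if_pos]
    exact hB a b (Or.inl ha)
  · rw [Finset.sum_congr rfl (fun c _ => by rw [hB c b (Or.inr hb)])]
    simp only [Matrix.one_apply, mul_ite, mul_one, mul_zero, Finset.sum_ite_eq',
      Finset.mem_univ, if_pos]
    exact hA a b (Or.inr hb)

lemma fixBelow_givens (i j : Fin d) (k : ℕ) (hi : k ≤ i.val) (hj : k ≤ j.val) (θ : ℝ) :
    FixBelow (givens d i j θ) k := by
  intro a b hab
  rcases hab with ha | hb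
  · exact givens_row_ne i j θ a b (by rintro rfl; omega) (by rintro rfl; omega)
  · exact givens_col_ne i j θ a b (by rintro rfl; omega) (by rintro rfl; omega)

lemma fixBelow_mono {V : M d} {k k' : ℕ} (h : FixBelow V k) (hk : k' ≤ k) :
    FixBelow V k' := by
  intro a b hab
  apply h a b
  rcases hab with h1 | h1
  · exact Or.inl (by omega)
  · exact Or.inr (by omega)

lemma fixBelow_listProd (k : ℕ) (L : List (M d)) (h : ∀ A ∈ L, FixBelow A k) :
    FixBelow L.prod k := by
  induction L with
  | nil => simp; exact fixBelow_one k
  | cons A t ih =>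
    rw [List.prod_cons]
    exact fixBelow_mul (h A (by simp)) (ih (fun B hB => h B (by simp [hB])))

lemma row_eq_imp_col {V : M d} (h : Vᵀ * V = 1) (j0 : Fin d)
    (hrow : ∀ b, V j0 b = (1 : M d) j0 b) : ∀ a, V a j0 = (1 : M d) a j0 := by
  intro a
  have h2 : V * Vᵀ = 1 := mul_eq_one_comm.mp h
  have := congrFun (congrFun h2 a) j0
  rw [Matrix.mul_apply] at this
  rw [Finset.sum_congr rfl (fun c _ => by
    rw [Matrix.transpose_apply, hrow c, Matrix.one_apply])] at this
  simp only [mul_ite, mul_one, mul_zero, Finset.sum_ite_eq, Finset.sum_ite_eq',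
    Finset.mem_univ, if_pos] at this
  exact this

lemma sum_sq_row {V : M d} (h : Vᵀ * V = 1) (a : Fin d) :
    ∑ b, V a b * V a b = 1 := by
  have h2 : V * Vᵀ = 1 := mul_eq_one_comm.mp h
  have := congrFun (congrFun h2 a) a
  rw [Matrix.mul_apply] at this
  simp only [Matrix.transpose_apply] at this
  rw [this, Matrix.one_apply_eq]

/-! ### angles -/

lemma exists_angle_full (c s : ℝ) (h : c^2 + s^2 = 1) :
    ∃ θ, 0 ≤ θ ∧ θ < 2*Real.pi ∧ Real.cos θ = c ∧ Real.sin θ = s := by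
  have hz : (⟨c, s⟩ : ℂ) ≠ 0 := by
    intro hc
    rw [Complex.ext_iff] at hc
    simp at hc
    rw [hc.1, hc.2] at h; norm_num at h
  have habs : ‖(⟨c, s⟩ : ℂ)‖ = 1 := by
    rw [Complex.norm_def, Complex.normSq_mk]
    rw [show c * c + s * s = 1 by nlinarith]
    exact Real.sqrt_one
  have hcos : Real.cos (Complex.arg ⟨c, s⟩) = c := by
    rw [Complex.cos_arg hz, habs]; simp
  have hsin : Real.sin (Complex.arg ⟨c, s⟩) = s := by
    rw [Complex.sin_arg, habs]; simp
  set φ := Complex.arg ⟨c, s⟩ with hφ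
  have h1 : -Real.pi < φ := Complex.neg_pi_lt_arg _
  have h2 : φ ≤ Real.pi := Complex.arg_le_pi _
  have hπ : 0 < Real.pi := Real.pi_pos
  by_cases hneg : φ < 0
  · exact ⟨φ + 2*Real.pi, by linarith, by linarith,
      by rw [Real.cos_add_two_pi]; exact hcos, by rw [Real.sin_add_two_pi]; exact hsin⟩
  · exact ⟨φ, by linarith, by linarith, hcos, hsin⟩

lemma exists_angle_half (c s : ℝ) (h : c^2 + s^2 = 1) (hs : 0 < s) :
    ∃ θ, 0 < θ ∧ θ < Real.pi ∧ Real.cos θ = c ∧ Real.sin θ = s := by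
  have hc1 : c < 1 := by nlinarith
  have hc2 : -1 < c := by nlinarith
  refine ⟨Real.arccos c, Real.arccos_pos.mpr hc1, ?_, Real.cos_arccos (by linarith) (by linarith), ?_⟩
  · refine lt_of_le_of_ne (Real.arccos_le_pi c) (fun heq => ?_)
    have := Real.cos_arccos (le_of_lt hc2) (le_of_lt hc1)
    rw [heq, Real.cos_pi] at this
    linarith
  · rw [Real.sin_arccos]
    rw [show 1 - c^2 = s^2 by linarith]
    exact Real.sqrt_sq (le_of_lt hs)

/-! ### sign diagonal matrices -/

def IsSign (ε : Fin d → ℝ) : Prop := ∀ i, ε i = 1 ∨ ε i = -1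

lemma isSign_one : IsSign (fun _ : Fin d => (1:ℝ)) := fun _ => Or.inl rfl

lemma diag_sq {ε : Fin d → ℝ} (hε : IsSign ε) :
    Matrix.diagonal ε * Matrix.diagonal ε = 1 := by
  rw [Matrix.diagonal_mul_diagonal]
  have : (fun i => ε i * ε i) = fun _ => (1:ℝ) := by
    funext i; rcases hε i with h | h <;> rw [h] <;> norm_num
  rw [this, Matrix.diagonal_one]

lemma diag_orth {ε : Fin d → ℝ} (hε : IsSign ε) :
    (Matrix.diagonal ε)ᵀ * Matrix.diagonal ε = 1 := by
  rw [Matrix.diagonal_transpose]; exact diag_sq hε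

/-! ### the swap lemma -/

lemma diag_mul_givens_swap (ε : Fin d → ℝ) (hε : IsSign ε) (i j : Fin d) (hij : i ≠ j)
    (θ : ℝ) (hθ0 : 0 ≤ θ) (hθπ : θ < Real.pi) :
    ∃ θ' ε', 0 ≤ θ' ∧ θ' < Real.pi ∧ IsSign ε' ∧ (∏ a, ε' a) = (∏ a, ε a) ∧
      (∀ a, a ≠ i → a ≠ j → ε' a = ε a) ∧
      Matrix.diagonal ε * givens d i j θ = givens d i j θ' * Matrix.diagonal ε' := by
  by_cases hs : ε i = ε j
  · refine ⟨θ, ε, hθ0, hθπ, hε, rfl, fun _ _ _ => rfl, ?_⟩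
    ext a b
    rw [Matrix.diagonal_mul, Matrix.mul_diagonal, givens_apply]
    by_cases hai : a = i <;> by_cases haj : a = j <;> by_cases hbi : b = i <;>
      by_cases hbj : b = j <;> by_cases hab : a = b <;> simp_all <;> ring
  · by_cases hθz : θ = 0
    · subst hθz
      refine ⟨0, ε, le_refl 0, Real.pi_pos, hε, rfl, fun _ _ _ => rfl, ?_⟩
      rw [givens_zero i j hij, mul_one, one_mul]
    · have hθpos : 0 < θ := lt_of_le_of_ne hθ0 (Ne.symm hθz)
      have hji : ε j = -ε i := by
        rcases hε i with h1 | h1 <;> rcases hε j with h2 | h2 <;> simp_all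
      refine ⟨Real.pi - θ, fun a => if a = i then ε j else if a = j then ε i else ε a,
        by linarith, by linarith, ?_, ?_, ?_, ?_⟩
      · intro a
        have hji' : j ≠ i := Ne.symm hij
        by_cases hai : a = i <;> by_cases haj : a = j <;>
          simp [hai, haj, hji', hε i, hε j, hε a]
      · have hfun : (fun a => if a = i then ε j else if a = j then ε i else ε a)
            = ε ∘ (Equiv.swap i j) := by
          funext a
          simp only [Function.comp, Equiv.swap_apply_def]
          have hji' : j ≠ i := Ne.symm hij
          by_cases hai : a = i <;> by_cases haj : a = j <;> simp [hai, haj, hji']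
        rw [hfun]
        exact Equiv.prod_comp (Equiv.swap i j) ε
      · intro a hai haj; simp [hai, haj]
      · ext a b
        rw [Matrix.diagonal_mul, Matrix.mul_diagonal, givens_apply, givens_apply]
        rw [Real.cos_pi_sub, Real.sin_pi_sub]
        by_cases hai : a = i <;> by_cases haj : a = j <;> by_cases hbi : b = i <;>
          by_cases hbj : b = j <;> by_cases hab : a = b <;> simp_all <;> ring

/-- pushing a sign diagonal leftwards through a product of row-`k` Givens factors. -/
lemma diag_mul_prod_swap (k : Fin d) :
    ∀ (L : List ℕ), (∀ m ∈ L, k.val < m ∧ m < d) → L.Nodup →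
    ∀ (η : ℕ → ℝ), (∀ m ∈ L, 0 ≤ η m ∧ η m < Real.pi) →
    ∀ (ε : Fin d → ℝ), IsSign ε →
    ∃ η' ε', (∀ m ∈ L, 0 ≤ η' m ∧ η' m < Real.pi) ∧ IsSign ε' ∧
      (∏ a, ε' a) = (∏ a, ε a) ∧ (∀ a : Fin d, a.val < k.val → ε' a = ε a) ∧
      Matrix.diagonal ε * (L.map (g k η)).prod = (L.map (g k η')).prod * Matrix.diagonal ε' := by
  intro L
  induction L with
  | nil =>
    intro _ _ η _ ε hε
    exact ⟨η, ε, by simp, hε, rfl, fun _ _ => rfl, by simp⟩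
  | cons m t ih =>
    intro hL hnd η hη ε hε
    have hmd : m < d := (hL m (by simp)).2
    have hkm : k.val < m := (hL m (by simp)).1
    have hne : k ≠ (⟨m, hmd⟩ : Fin d) := by
      intro h
      have := congrArg Fin.val h
      simp at this
      omega
    obtain ⟨θ', ε₁, hθ'0, hθ'π, hε₁, hprod₁, hpres₁, heq₁⟩ :=
      diag_mul_givens_swap ε hε k ⟨m, hmd⟩ hne (η m)
        (hη m (by simp)).1 (hη m (by simp)).2
    obtain ⟨η₂, ε₂, hη₂, hε₂, hprod₂, hpres₂, heq₂⟩ :=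
      ih (fun n hn => hL n (by simp [hn])) (List.Nodup.of_cons hnd) η
        (fun n hn => hη n (by simp [hn])) ε₁ hε₁
    refine ⟨fun n => if n = m then θ' else η₂ n, ε₂, ?_, hε₂, by rw [hprod₂, hprod₁], ?_, ?_⟩
    · intro n hn
      by_cases hnm : n = m
      · simp [hnm]; exact ⟨hθ'0, hθ'π⟩
      · simp only [if_neg hnm]
        exact hη₂ n (by rcases List.mem_cons.mp hn with h | h; exact absurd h hnm; exact h)
    · intro a ha
      rw [hpres₂ a ha, hpres₁ a (by intro h; rw [h] at ha; omega)
        (by intro h; rw [h] at ha; simp at ha; omega)]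
    · have hmem : m ∉ t := (List.nodup_cons.mp hnd).1
      have hmapt : t.map (g k (fun n => if n = m then θ' else η₂ n)) = t.map (g k η₂) := by
        apply List.map_congr_left
        intro n hn
        have : n ≠ m := fun h => hmem (h ▸ hn)
        simp [g, this]
      rw [List.map_cons, List.map_cons, List.prod_cons, List.prod_cons, hmapt]
      have hg : g k η m = givens d k ⟨m, hmd⟩ (η m) := by simp [g, hmd]
      have hg' : g k (fun n => if n = m then θ' else η₂ n) m = givens d k ⟨m, hmd⟩ θ' := by
        simp [g, hmd]
      rw [hg, hg', ← mul_assoc, heq₁, mul_assoc, heq₂, ← mul_assoc]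

/-! ### peeling one Givens factor -/

lemma peel (k j1 : Fin d) (hkj : k.val < j1.val) (V : M d) (hV : Vᵀ*V = 1)
    (hdet : V.det = 1) (hfix : FixBelow V k.val) (θ : ℝ) :
    (V * givens d k j1 (-θ))ᵀ * (V * givens d k j1 (-θ)) = 1 ∧
    (V * givens d k j1 (-θ)).det = 1 ∧
    FixBelow (V * givens d k j1 (-θ)) k.val ∧
    (V * givens d k j1 (-θ)) * givens d k j1 θ = V ∧
    (∀ a b, b ≠ k → b ≠ j1 → (V * givens d k j1 (-θ)) a b = V a b) ∧
    (∀ a, (V * givens d k j1 (-θ)) a k = Real.cos θ * V a k + Real.sin θ * V a j1) ∧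
    (∀ a, (V * givens d k j1 (-θ)) a j1 = -Real.sin θ * V a k + Real.cos θ * V a j1) := by
  have hne : k ≠ j1 := by
    intro h; rw [h] at hkj; omega
  refine ⟨?_, ?_, ?_, ?_, ?_, ?_, ?_⟩
  · rw [Matrix.transpose_mul, givens_transpose k j1 hne, neg_neg, mul_assoc,
      ← mul_assoc Vᵀ V, hV, one_mul, givens_mul_neg k j1 hne]
  · rw [Matrix.det_mul, hdet, givens_det k j1 hne, mul_one]
  · exact fixBelow_mul hfix (fixBelow_givens k j1 k.val (le_refl _) (le_of_lt hkj) (-θ))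
  · rw [mul_assoc, givens_neg_mul k j1 hne]
    rw [mul_one]
  · intro a b hb1 hb2
    rw [mul_givens_apply V k j1 hne, if_neg hb1, if_neg hb2]
  · intro a
    rw [mul_givens_apply V k j1 hne, if_pos rfl, Real.cos_neg, Real.sin_neg]
    ring
  · intro a
    rw [mul_givens_apply V k j1 hne, if_neg (Ne.symm hne), if_pos rfl, Real.cos_neg,
      Real.sin_neg]

/-! ### the Good predicate -/

def Good (V : M d) (k : Fin d) (l : ℕ) : Prop :=
  ((∀ j : Fin d, l < j.val → V k j = 0) ∧ 0 < V k k) ∨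
  (∃ jh : Fin d, l < jh.val ∧ 0 < V k jh ∧ ∀ j : Fin d, jh.val < j.val → V k j = 0)

/-- row norm: if all entries of row `a` except possibly at `c` vanish, `V a c = ±1`. -/
lemma row_single_sq {V : M d} (hV : Vᵀ*V = 1) (a c : Fin d)
    (hz : ∀ b, b ≠ c → V a b = 0) : V a c * V a c = 1 := by
  have := sum_sq_row hV a
  rw [Finset.sum_eq_single_of_mem c (Finset.mem_univ c)
    (fun b _ hb => by rw [hz b hb, mul_zero])] at this
  exact this

/-- rows `≤ k` of a FixBelow matrix with unit row `k` give FixBelow (k+1). -/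
lemma fixBelow_succ_of_row {V : M d} (hV : Vᵀ*V = 1) (k : Fin d)
    (hfix : FixBelow V k.val) (hrow : ∀ b, V k b = (1 : M d) k b) :
    FixBelow V (k.val + 1) := by
  have hcol := row_eq_imp_col hV k hrow
  intro a b hab
  by_cases ha : a.val < k.val
  · exact hfix a b (Or.inl ha)
  · by_cases hb : b.val < k.val
    · exact hfix a b (Or.inr hb)
    · rcases hab with h | h
      · have : a = k := Fin.ext (by omega)
        rw [this]; exact hrow b
      · have : b = k := Fin.ext (by omega)
        rw [this]; exact hcol a

/-! ### half-range row reduction -/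

lemma res_half (k : Fin d) : ∀ n : ℕ, ∀ l : ℕ, l + n + 1 = d → k.val ≤ l →
    ∀ V : M d, Vᵀ * V = 1 → V.det = 1 → FixBelow V k.val →
    (∀ j : Fin d, k.val < j.val → j.val ≤ l → V k j = 0) → Good V k l →
    ∃ η : ℕ → ℝ, (∀ m, l < m → m < d → 0 ≤ η m ∧ η m < Real.pi) ∧
    ∃ W : M d, Wᵀ * W = 1 ∧ W.det = 1 ∧ FixBelow W (k.val + 1) ∧
      V = W * dprod (g k η) (l + 1) d := by
  intro n
  induction n with
  | zero =>
    intro l hl hkl V hV hdet hfix hz hgood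
    have hzrow : ∀ b : Fin d, b ≠ k → V k b = 0 := by
      intro b hb
      by_cases hbk : b.val < k.val
      · rw [hfix k b (Or.inr hbk), Matrix.one_apply_ne (Ne.symm hb)]
      · have hkb : k.val < b.val := by
          rcases Nat.lt_or_ge k.val b.val with h | h
          · exact h
          · exact absurd (Fin.ext (by omega) : b = k) hb
        exact hz b hkb (by omega)
    have hpos : 0 < V k k := by
      rcases hgood with ⟨_, hpos⟩ | ⟨jh, hjh1, _, _⟩
      · exact hpos
      · have := jh.isLt; omega
    have hkk : V k k = 1 := by
      have := row_single_sq hV k k hzrow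
      nlinarith
    have hrow : ∀ b, V k b = (1 : M d) k b := by
      intro b
      by_cases hb : b = k
      · rw [hb, hkk, Matrix.one_apply_eq]
      · rw [hzrow b hb, Matrix.one_apply_ne (Ne.symm hb)]
    refine ⟨fun _ => 0, by intro m h1 h2; omega, V, hV, hdet,
      fixBelow_succ_of_row hV k hfix hrow, ?_⟩
    rw [show l + 1 = d by omega, dprod_self _ _ _ (le_refl d), mul_one]
  | succ n ih =>
    intro l hl hkl V hV hdet hfix hz hgood
    have hl1d : l + 1 < d := by omega
    have hkd : k.val < d := k.isLt
    set j1 : Fin d := ⟨l+1, hl1d⟩ with hj1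
    have hj1v : j1.val = l + 1 := rfl
    have hkj1 : k.val < j1.val := by omega
    have hkne : k ≠ j1 := fun h => by rw [h] at hkj1; omega
    by_cases hy : V k j1 = 0
    · -- the entry to clear is already zero: skip with angle 0
      have hz' : ∀ j : Fin d, k.val < j.val → j.val ≤ l + 1 → V k j = 0 := by
        intro j h1 h2
        rcases Nat.lt_or_ge j.val (l+1) with h3 | h3
        · exact hz j h1 (by omega)
        · have : j = j1 := Fin.ext (by omega)
          rw [this]; exact hy
      have hgood' : Good V k (l+1) := by
        rcases hgood with ⟨hza, hpos⟩ | ⟨jh, hjh1, hjh2, hjh3⟩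
        · exact Or.inl ⟨fun j hj => hza j (by omega), hpos⟩
        · refine Or.inr ⟨jh, ?_, hjh2, hjh3⟩
          rcases Nat.lt_or_ge (l+1) jh.val with h3 | h3
          · exact h3
          · exfalso
            have : jh = j1 := Fin.ext (by omega)
            rw [this, hy] at hjh2
            exact lt_irrefl 0 hjh2
      obtain ⟨η, hηr, W, hW1, hW2, hW3, hWeq⟩ :=
        ih (l+1) (by omega) (by omega) V hV hdet hfix hz' hgood'
      refine ⟨fun m => if m = l+1 then 0 else η m, ?_, W, hW1, hW2, hW3, ?_⟩
      · intro m h1 h2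
        by_cases hm : m = l+1
        · simp only [hm, if_pos rfl]
          exact ⟨le_refl 0, Real.pi_pos⟩
        · simp only [if_neg hm]
          exact hηr m (by omega) h2
      · rw [dprod_lo _ _ _ hl1d]
        have hcong : dprod (g k (fun m => if m = l+1 then 0 else η m)) (l+2) d
            = dprod (g k η) (l+2) d := by
          apply dprod_congr
          intro m hm1 hm2
          have : m ≠ l + 1 := by omega
          simp [g, this]
        have hglast : g k (fun m => if m = l+1 then 0 else η m) (l+1) = 1 := by
          simp only [g, hl1d, dif_pos, if_pos rfl]
          exact givens_zero k j1 hkne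
        rw [hcong, hglast, mul_one, ← hWeq]
    · -- genuine rotation
      have hgood2 : ∃ jh : Fin d, l < jh.val ∧ 0 < V k jh ∧
          ∀ j : Fin d, jh.val < j.val → V k j = 0 := by
        rcases hgood with ⟨hza, _⟩ | h2
        · exact absurd (hza j1 (by omega)) hy
        · exact h2
      obtain ⟨jh, hjh1, hjh2, hjh3⟩ := hgood2
      set x := V k k with hx
      set y := V k j1 with hyy
      have hy2 : 0 < y^2 := by positivity
      have hr2 : 0 < x^2 + y^2 := by nlinarith [sq_nonneg x]
      set r := Real.sqrt (x^2 + y^2) with hr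
      have hrpos : 0 < r := Real.sqrt_pos.mpr hr2
      have hrr : r * r = x^2 + y^2 := Real.mul_self_sqrt (le_of_lt hr2)
      set σ : ℝ := if 0 < y then 1 else -1 with hσ
      have hσy : 0 < σ * y := by
        by_cases h : 0 < y
        · simp only [hσ, if_pos h, one_mul]; exact h
        · have hylt : y < 0 := lt_of_le_of_ne (le_of_not_gt h) hy
          simp only [hσ, if_neg h]
          nlinarith
      have hσ2 : σ * σ = 1 := by
        by_cases h : 0 < y <;> simp [hσ, h]
      set c := σ * x / r with hc
      set s := σ * y / r with hs'
      have hs : 0 < s := div_pos hσy hrpos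
      have hcs : c^2 + s^2 = 1 := by
        rw [hc, hs']
        rw [div_pow, div_pow, ← add_div]
        rw [show (σ*x)^2 + (σ*y)^2 = (σ*σ)*(x^2+y^2) by ring, hσ2, one_mul]
        rw [show r^2 = r * r by ring, hrr]
        exact div_self (ne_of_gt hr2)
      obtain ⟨θn, hθn1, hθn2, hθnc, hθns⟩ := exists_angle_half c s hcs hs
      obtain ⟨hO, hD, hF, hVrec, hunch, hcolk, hcolj⟩ := peel k j1 hkj1 V hV hdet hfix θn
      set V' := V * givens d k j1 (-θn) with hV'
      have hz' : ∀ j : Fin d, k.val < j.val → j.val ≤ l + 1 → V' k j = 0 := by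
        intro j hja hjb
        rcases Nat.lt_or_ge j.val (l+1) with h3 | h3
        · rw [hunch k j (fun h => by rw [h] at hja; omega)
            (fun h => by rw [h] at h3; omega)]
          exact hz j hja (by omega)
        · have : j = j1 := Fin.ext (by omega)
          rw [this, hcolj k, hθnc, hθns, ← hx, ← hyy]
          field_simp
          ring
      have hgood' : Good V' k (l+1) := by
        rcases Nat.lt_or_ge (l+1) jh.val with hcase | hcase
        · refine Or.inr ⟨jh, hcase, ?_, ?_⟩
          · rw [hunch k jh (fun h => by rw [h] at hjh1; omega)
              (fun h => by rw [h] at hcase; omega)]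
            exact hjh2
          · intro j hj
            rw [hunch k j (fun h => by rw [h] at hj; omega)
              (fun h => by rw [h] at hj; omega)]
            exact hjh3 j (by omega)
        · have hjheq : jh = j1 := Fin.ext (by omega)
          have hypos : 0 < y := by rw [hyy, ← hjheq]; exact hjh2
          have hσ1 : σ = 1 := by simp [hσ, hypos]
          refine Or.inl ⟨?_, ?_⟩
          · intro j hj
            rw [hunch k j (fun h => by rw [h] at hj; omega)
              (fun h => by rw [h] at hj; omega)]
            exact hjh3 j (by rw [hjheq] at hjh3 ⊢; omega)
          · rw [hcolk k, hθnc, hθns, hc, hs', hσ1, ← hx, ← hyy]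
            have : 1 * x / r * x + 1 * y / r * y = (x^2 + y^2)/r := by
              field_simp
            rw [this]
            exact div_pos hr2 hrpos
      obtain ⟨η, hηr, W, hW1, hW2, hW3, hWeq⟩ :=
        ih (l+1) (by omega) (by omega) V' hO hD hF hz' hgood'
      refine ⟨fun m => if m = l+1 then θn else η m, ?_, W, hW1, hW2, hW3, ?_⟩
      · intro m h1 h2
        by_cases hm : m = l+1
        · simp only [hm, if_pos rfl]
          exact ⟨le_of_lt hθn1, hθn2⟩
        · simp only [if_neg hm]
          exact hηr m (by omega) h2
      · rw [dprod_lo _ _ _ hl1d]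
        have hcong : dprod (g k (fun m => if m = l+1 then θn else η m)) (l+2) d
            = dprod (g k η) (l+2) d := by
          apply dprod_congr
          intro m hm1 hm2
          have : m ≠ l + 1 := by omega
          simp [g, this]
        have hglast : g k (fun m => if m = l+1 then θn else η m) (l+1)
            = givens d k j1 θn := by
          simp [g, hl1d]; rfl
        rw [hcong, hglast, ← mul_assoc, ← hWeq]
        exact hVrec.symm

lemma fixBelow_zero (V : M d) : FixBelow V 0 := by
  intro a b hab
  rcases hab with h | h <;> omega

/-! ### full-range row reduction for row 0 -/

lemma res_full (k0 : Fin d) (hk0 : k0.val = 0) (hd2 : 2 ≤ d) :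
    ∀ n : ℕ, ∀ l : ℕ, l + n + 1 = d →
    ∀ V : M d, Vᵀ * V = 1 → V.det = 1 →
    (∀ j : Fin d, 0 < j.val → j.val ≤ l → V k0 j = 0) →
    (0 < l → 0 ≤ V k0 k0) →
    ∃ η : ℕ → ℝ, (∀ m, l < m → m < d → 0 ≤ η m ∧ η m < 2 * Real.pi) ∧
    ∃ W : M d, Wᵀ * W = 1 ∧ W.det = 1 ∧ FixBelow W 1 ∧
      V = W * dprod (g k0 η) (l + 1) d := by
  intro n
  induction n with
  | zero =>
    intro l hl V hV hdet hz hinv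
    have hl1 : 1 ≤ l := by omega
    have hzrow : ∀ b : Fin d, b ≠ k0 → V k0 b = 0 := by
      intro b hb
      have hb0 : 0 < b.val := by
        rcases Nat.eq_zero_or_pos b.val with h | h
        · exact absurd (Fin.ext (by omega) : b = k0) hb
        · exact h
      exact hz b hb0 (by omega)
    have hpos : 0 ≤ V k0 k0 := hinv (by omega)
    have hkk : V k0 k0 = 1 := by
      have := row_single_sq hV k0 k0 hzrow
      nlinarith
    have hrow : ∀ b, V k0 b = (1 : M d) k0 b := by
      intro b
      by_cases hb : b = k0
      · rw [hb, hkk, Matrix.one_apply_eq]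
      · rw [hzrow b hb, Matrix.one_apply_ne (Ne.symm hb)]
    have hfix1 : FixBelow V 1 := by
      have := fixBelow_succ_of_row hV k0 (by rw [hk0]; exact fixBelow_zero V) hrow
      rw [hk0] at this
      exact this
    refine ⟨fun _ => 0, by intro m h1 h2; omega, V, hV, hdet, hfix1, ?_⟩
    rw [show l + 1 = d by omega, dprod_self _ _ _ (le_refl d), mul_one]
  | succ n ih =>
    intro l hl V hV hdet hz hinv
    have hl1d : l + 1 < d := by omega
    set j1 : Fin d := ⟨l+1, hl1d⟩ with hj1
    have hj1v : j1.val = l + 1 := rfl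
    have hkj1 : k0.val < j1.val := by omega
    have hkne : k0 ≠ j1 := fun h => by
      have := congrArg Fin.val h
      omega
    set x := V k0 k0 with hx
    set y := V k0 j1 with hyy
    by_cases hxy : x = 0 ∧ y = 0
    · -- skip
      have hz' : ∀ j : Fin d, 0 < j.val → j.val ≤ l + 1 → V k0 j = 0 := by
        intro j h1 h2
        rcases Nat.lt_or_ge j.val (l+1) with h3 | h3
        · exact hz j h1 (by omega)
        · have : j = j1 := Fin.ext (by omega)
          rw [this, ← hyy]; exact hxy.2
      obtain ⟨η, hηr, W, hW1, hW2, hW3, hWeq⟩ :=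
        ih (l+1) (by omega) V hV hdet hz'
          (fun _ => by rw [← hx, hxy.1])
      refine ⟨fun m => if m = l+1 then 0 else η m, ?_, W, hW1, hW2, hW3, ?_⟩
      · intro m h1 h2
        by_cases hm : m = l+1
        · simp only [hm, if_pos rfl]
          exact ⟨le_refl 0, by positivity⟩
        · simp only [if_neg hm]
          exact hηr m (by omega) h2
      · rw [dprod_lo _ _ _ hl1d]
        have hcong : dprod (g k0 (fun m => if m = l+1 then 0 else η m)) (l+2) d
            = dprod (g k0 η) (l+2) d := by
          apply dprod_congr
          intro m hm1 hm2
          have : m ≠ l + 1 := by omega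
          simp [g, this]
        have hglast : g k0 (fun m => if m = l+1 then 0 else η m) (l+1) = 1 := by
          simp only [g, hl1d, dif_pos, if_pos rfl]
          exact givens_zero k0 j1 hkne
        rw [hcong, hglast, mul_one, ← hWeq]
    · -- rotate
      have hr2 : 0 < x^2 + y^2 := by
        rcases not_and_or.mp hxy with h | h
        · have h2 : 0 < x^2 := by positivity
          nlinarith [sq_nonneg y]
        · have h2 : 0 < y^2 := by positivity
          nlinarith [sq_nonneg x]
      set r := Real.sqrt (x^2 + y^2) with hr
      have hrpos : 0 < r := Real.sqrt_pos.mpr hr2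
      have hrr : r * r = x^2 + y^2 := Real.mul_self_sqrt (le_of_lt hr2)
      set c := x / r with hc
      set s := y / r with hs'
      have hcs : c^2 + s^2 = 1 := by
        rw [hc, hs', div_pow, div_pow, ← add_div,
          show r^2 = r * r by ring, hrr]
        exact div_self (ne_of_gt hr2)
      obtain ⟨θn, hθn1, hθn2, hθnc, hθns⟩ := exists_angle_full c s hcs
      obtain ⟨hO, hD, hF, hVrec, hunch, hcolk, hcolj⟩ :=
        peel k0 j1 hkj1 V hV hdet (by rw [hk0]; exact fixBelow_zero V) θn
      set V' := V * givens d k0 j1 (-θn) with hV'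
      have hz' : ∀ j : Fin d, 0 < j.val → j.val ≤ l + 1 → V' k0 j = 0 := by
        intro j hja hjb
        rcases Nat.lt_or_ge j.val (l+1) with h3 | h3
        · rw [hunch k0 j (fun h => by rw [h] at hja; omega)
            (fun h => by rw [h] at h3; omega)]
          exact hz j hja (by omega)
        · have : j = j1 := Fin.ext (by omega)
          rw [this, hcolj k0, hθnc, hθns, hc, hs', ← hx, ← hyy]
          field_simp
          ring
      have hinv' : 0 < l + 1 → 0 ≤ V' k0 k0 := by
        intro _
        rw [hcolk k0, hθnc, hθns, hc, hs', ← hx, ← hyy]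
        have : x / r * x + y / r * y = (x^2 + y^2)/r := by field_simp
        rw [this]
        positivity
      obtain ⟨η, hηr, W, hW1, hW2, hW3, hWeq⟩ :=
        ih (l+1) (by omega) V' hO hD hz' hinv'
      refine ⟨fun m => if m = l+1 then θn else η m, ?_, W, hW1, hW2, hW3, ?_⟩
      · intro m h1 h2
        by_cases hm : m = l+1
        · simp only [hm, if_pos rfl]
          exact ⟨hθn1, hθn2⟩
        · simp only [if_neg hm]
          exact hηr m (by omega) h2
      · rw [dprod_lo _ _ _ hl1d]
        have hcong : dprod (g k0 (fun m => if m = l+1 then θn else η m)) (l+2) d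
            = dprod (g k0 η) (l+2) d := by
          apply dprod_congr
          intro m hm1 hm2
          have : m ≠ l + 1 := by omega
          simp [g, this]
        have hglast : g k0 (fun m => if m = l+1 then θn else η m) (l+1)
            = givens d k0 j1 θn := by
          simp [g, hl1d]; rfl
        rw [hcong, hglast, ← mul_assoc, ← hWeq]
        exact hVrec.symm

/-! ### left multiplication by a Givens rotation -/

lemma givens_mul_apply (A : M d) (i j : Fin d) (hij : i ≠ j) (θ : ℝ) (a b : Fin d) :
    (givens d i j θ * A) a b =
      if a = i then Real.cos θ * A i b + Real.sin θ * A j b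
      else if a = j then -Real.sin θ * A i b + Real.cos θ * A j b
      else A a b := by
  have h1 : (givens d i j θ * A) a b = ((givens d i j θ * A)ᵀ) b a := rfl
  rw [h1, Matrix.transpose_mul, givens_transpose i j hij,
    mul_givens_apply Aᵀ i j hij (-θ) b a, Real.cos_neg, Real.sin_neg]
  by_cases hai : a = i <;> by_cases haj : a = j <;>
    simp [hai, haj, Matrix.transpose_apply] <;> ring

/-! ### zero pattern of row-0 products -/

lemma row0_pattern (k0 : Fin d) (hk0 : k0.val = 0) :
    ∀ L : List ℕ, L.Pairwise (· > ·) → (∀ m ∈ L, 0 < m ∧ m < d) → ∀ η : ℕ → ℝ,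
    (∀ a : Fin d, a ≠ k0 → a.val ∉ L → ∀ b, (L.map (g k0 η)).prod a b = (1 : M d) a b) ∧
    (∀ b : Fin d, b ≠ k0 → b.val ∉ L → (L.map (g k0 η)).prod k0 b = 0) ∧
    (∀ a b : Fin d, 0 < a.val → a.val < b.val → (L.map (g k0 η)).prod a b = 0) := by
  intro L
  induction L with
  | nil =>
    intro _ _ η
    refine ⟨fun a _ _ b => by simp, fun b hb _ => ?_, fun a b h1 h2 => ?_⟩
    · simp only [List.map_nil, List.prod_nil]
      exact Matrix.one_apply_ne (fun h => hb (h ▸ rfl))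
    · simp only [List.map_nil, List.prod_nil]
      exact Matrix.one_apply_ne (fun h => by rw [h] at h2; omega)
  | cons m t ih =>
    intro hpw hmem η
    have hmd : m < d := (hmem m (by simp)).2
    have hm0 : 0 < m := (hmem m (by simp)).1
    have hmt : ∀ n ∈ t, m > n := (List.pairwise_cons.mp hpw).1
    have hpwt : t.Pairwise (· > ·) := (List.pairwise_cons.mp hpw).2
    have hmemt : ∀ n ∈ t, 0 < n ∧ n < d := fun n hn => hmem n (by simp [hn])
    obtain ⟨C3, C2, C1⟩ := ih hpwt hmemt η
    set jm : Fin d := ⟨m, hmd⟩ with hjm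
    have hjmv : jm.val = m := rfl
    have hkjm : k0 ≠ jm := fun h => by
      have := congrArg Fin.val h
      omega
    have hg : g k0 η m = givens d k0 jm (η m) := by simp [g, hmd]; rfl
    have hprod : ((m :: t).map (g k0 η)).prod
        = givens d k0 jm (η m) * (t.map (g k0 η)).prod := by
      rw [List.map_cons, List.prod_cons, hg]
    have hmnott : m ∉ t := fun h => by have := hmt m h; omega
    refine ⟨?_, ?_, ?_⟩
    · -- C3
      intro a ha hal b
      have ham : a ≠ jm := fun h => hal (by rw [h]; simp [hjmv])
      rw [hprod, givens_mul_apply _ k0 jm hkjm, if_neg ha, if_neg ham]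
      exact C3 a ha (fun h => hal (by simp [h])) b
    · -- C2
      intro b hb hbl
      have hbm : b ≠ jm := fun h => hbl (by rw [h]; simp [hjmv])
      rw [hprod, givens_mul_apply _ k0 jm hkjm, if_pos rfl]
      rw [C2 b hb (fun h => hbl (by simp [h]))]
      rw [C3 jm hkjm.symm (by rw [hjmv]; exact hmnott) b,
        Matrix.one_apply_ne (Ne.symm hbm)]
      ring
    · -- C1
      intro a b ha hab
      rw [hprod, givens_mul_apply _ k0 jm hkjm,
        if_neg (fun h => by rw [h] at ha; omega)]
      by_cases ham : a = jm
      · rw [if_pos ham]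
        have hbt : b.val ∉ t := fun h => by
          have := hmt b.val h
          rw [ham] at hab
          omega
        have hbk : b ≠ k0 := fun h => by rw [h] at hab; omega
        have h2 : jm.val < b.val := by
          have := congrArg Fin.val ham
          omega
        rw [C2 b hbk hbt, C1 jm b hm0 h2]
        ring
      · rw [if_neg ham]
        exact C1 a b ha hab
/-! ### recognising row-0 products -/

lemma image_row0 (k0 : Fin d) (hk0 : k0.val = 0) : ∀ n : ℕ, ∀ jj : ℕ, jj + n = d → 1 ≤ jj →
    ∀ R : M d, Rᵀ * R = 1 → R.det = 1 →
    (∀ a : Fin d, 1 ≤ a.val → a.val < jj →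
      (∀ b, R a b = (1 : M d) a b) ∧ (∀ b, R b a = (1 : M d) b a)) →
    (∀ a b : Fin d, 1 ≤ a.val → a.val < b.val → R a b = 0) →
    ∃ η : ℕ → ℝ, (∀ m, jj ≤ m → m < d → 0 ≤ η m ∧ η m < 2 * Real.pi) ∧
      R = dprod (g k0 η) jj d := by
  intro n
  induction n with
  | zero =>
    intro jj hjd hjj R hR hdet H3 H4
    have hzero : ∀ a b : Fin d, a ≠ b → R a b = 0 := by
      intro a b hab
      by_cases ha : 1 ≤ a.val
      · rw [(H3 a ha (by omega)).1 b, Matrix.one_apply_ne hab]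
      · have hb : 1 ≤ b.val := by
          by_contra hb
          exact hab (Fin.ext (by omega))
        rw [(H3 b hb (by omega)).2 a, Matrix.one_apply_ne hab]
    have hdiag1 : ∀ a : Fin d, a ≠ k0 → R a a = 1 := by
      intro a ha
      have ha1 : 1 ≤ a.val := by
        rcases Nat.eq_zero_or_pos a.val with h | h
        · exact absurd (Fin.ext (by omega)) ha
        · exact h
      rw [(H3 a ha1 (by omega)).1 a, Matrix.one_apply_eq]
    have hRdiag : R = Matrix.diagonal (Function.update (fun _ : Fin d => (1:ℝ)) k0 (R k0 k0)) := by
      ext a b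
      rw [Matrix.diagonal_apply]
      by_cases hab : a = b
      · rw [if_pos hab, ← hab]
        by_cases hak : a = k0
        · rw [hak, Function.update_self]
        · rw [Function.update_of_ne hak, hdiag1 a hak]
      · rw [if_neg hab, hzero a b hab]
    have hdet2 : R k0 k0 = 1 := by
      have := hdet
      rw [hRdiag, Matrix.det_diagonal,
        Finset.prod_update_of_mem (Finset.mem_univ k0)] at this
      simpa using this
    have hR1 : R = 1 := by
      rw [hRdiag, hdet2]
      have : Function.update (fun _ : Fin d => (1:ℝ)) k0 1 = fun _ => (1:ℝ) := by
        funext i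
        by_cases h : i = k0 <;> simp [h]
      rw [this, Matrix.diagonal_one]
    refine ⟨fun _ => 0, by intro m h1 h2; omega, ?_⟩
    rw [dprod_self _ _ _ (by omega), hR1]
  | succ n ih =>
    intro jj hjd hjj R hR hdet H3 H4
    have hjjd : jj < d := by omega
    set j1 : Fin d := ⟨jj, hjjd⟩ with hj1
    have hj1v : j1.val = jj := rfl
    have hkj1 : k0.val < j1.val := by omega
    have hkne : k0 ≠ j1 := fun h => by
      have := congrArg Fin.val h; omega
    have hbne0 : ∀ b : Fin d, b ≠ k0 → 0 < b.val := by
      intro b hb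
      rcases Nat.eq_zero_or_pos b.val with h | h
      · exact absurd (Fin.ext (by omega)) hb
      · exact h
    have hrowz : ∀ b : Fin d, b ≠ k0 → b ≠ j1 → R j1 b = 0 := by
      intro b hb1 hb2
      rcases Nat.lt_or_ge b.val jj with h3 | h3
      · rw [(H3 b (hbne0 b hb1) h3).2 j1]
        exact Matrix.one_apply_ne (fun h => by have := congrArg Fin.val h; omega)
      · have h4 : jj < b.val := by
          rcases Nat.lt_or_ge jj b.val with h | h
          · exact h
          · exact absurd (Fin.ext (by omega)) hb2
        exact H4 j1 b (by omega) (by omega)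
    set x := R j1 k0 with hx
    set yv := R j1 j1 with hyv
    have hnorm : x * x + yv * yv = 1 := by
      have hsum := sum_sq_row hR j1
      have hsub : ∑ b ∈ ({k0, j1} : Finset (Fin d)), R j1 b * R j1 b
          = ∑ b, R j1 b * R j1 b := by
        apply Finset.sum_subset (Finset.subset_univ _)
        intro b _ hb
        simp only [Finset.mem_insert, Finset.mem_singleton, not_or] at hb
        rw [hrowz b hb.1 hb.2, mul_zero]
      rw [Finset.sum_pair hkne] at hsub
      rw [← hx, ← hyv] at hsub
      rw [hsub, hsum]
    have hcs : yv^2 + (-x)^2 = 1 := by nlinarith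
    obtain ⟨θj, hθ1, hθ2, hθc, hθs⟩ := exists_angle_full yv (-x) hcs
    obtain ⟨hO, hD, hF, hRrec, hunch, hcolk, hcolj⟩ :=
      peel k0 j1 hkj1 R hR hdet (by rw [hk0]; exact fixBelow_zero R) θj
    set R' := R * givens d k0 j1 (-θj) with hR'
    have hrow' : ∀ b, R' j1 b = (1 : M d) j1 b := by
      intro b
      by_cases hb1 : b = k0
      · rw [hb1, hcolk j1, hθc, hθs, ← hx, ← hyv,
          Matrix.one_apply_ne (Ne.symm hkne)]
        ring
      · by_cases hb2 : b = j1
        · rw [hb2, hcolj j1, hθc, hθs, ← hx, ← hyv, Matrix.one_apply_eq]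
          nlinarith
        · rw [hunch j1 b hb1 hb2, hrowz b hb1 hb2,
            Matrix.one_apply_ne (fun h => hb2 (h.symm))]
    have hcol' := row_eq_imp_col hO j1 hrow'
    have H3' : ∀ a : Fin d, 1 ≤ a.val → a.val < jj + 1 →
        (∀ b, R' a b = (1 : M d) a b) ∧ (∀ b, R' b a = (1 : M d) b a) := by
      intro a ha1 ha2
      rcases Nat.lt_or_ge a.val jj with hcase | hcase
      · have hak : a ≠ k0 := fun h => by rw [h] at ha1; omega
        have haj : a ≠ j1 := fun h => by
          have := congrArg Fin.val h; omega
        constructor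
        · intro b
          by_cases hb1 : b = k0
          · rw [hb1, hcolk a, hθc, hθs, (H3 a ha1 hcase).1 k0, (H3 a ha1 hcase).1 j1,
              Matrix.one_apply_ne hak, Matrix.one_apply_ne haj]
            ring
          · by_cases hb2 : b = j1
            · rw [hb2, hcolj a, hθc, hθs, (H3 a ha1 hcase).1 k0, (H3 a ha1 hcase).1 j1,
                Matrix.one_apply_ne hak, Matrix.one_apply_ne haj]
              ring
            · rw [hunch a b hb1 hb2]
              exact (H3 a ha1 hcase).1 b
        · intro b
          rw [hunch b a hak haj]
          exact (H3 a ha1 hcase).2 b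
      · have haj : a = j1 := Fin.ext (by omega)
        rw [haj]
        exact ⟨hrow', hcol'⟩
    have H4' : ∀ a b : Fin d, 1 ≤ a.val → a.val < b.val → R' a b = 0 := by
      intro a b ha hab
      have hbk : b ≠ k0 := fun h => by rw [h] at hab; omega
      by_cases hbj : b = j1
      · have haval : a.val < jj := by
          have := congrArg Fin.val hbj
          omega
        rw [hbj, hcolj a, hθc, hθs, (H3 a ha haval).1 k0, (H3 a ha haval).1 j1,
          Matrix.one_apply_ne (fun h => by rw [h] at ha; omega),
          Matrix.one_apply_ne (fun h => by
            have := congrArg Fin.val h; omega)]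
        ring
      · rw [hunch a b hbk hbj]
        exact H4 a b ha hab
    obtain ⟨η, hηr, hReq⟩ := ih (jj+1) (by omega) (by omega) R' hO hD H3' H4'
    refine ⟨fun m => if m = jj then θj else η m, ?_, ?_⟩
    · intro m h1 h2
      by_cases hm : m = jj
      · simp only [hm, if_pos rfl]
        exact ⟨hθ1, hθ2⟩
      · simp only [if_neg hm]
        exact hηr m (by omega) h2
    · rw [dprod_lo _ _ _ hjjd]
      have hcong : dprod (g k0 (fun m => if m = jj then θj else η m)) (jj+1) d
          = dprod (g k0 η) (jj+1) d := by
        apply dprod_congr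
        intro m hm1 hm2
        have : m ≠ jj := by omega
        simp [g, this]
      have hglast : g k0 (fun m => if m = jj then θj else η m) jj
          = givens d k0 j1 θj := by
        simp [g, hjjd]; rfl
      rw [hcong, hglast, ← hReq, ← hRrec]
/-! ### orthogonality and determinant of the basic products -/

lemma orth_listProd (L : List (M d)) (h : ∀ A ∈ L, Aᵀ * A = 1) :
    (L.prod)ᵀ * L.prod = 1 := by
  induction L with
  | nil => simp
  | cons A t ih =>
    rw [List.prod_cons, Matrix.transpose_mul, mul_assoc, ← mul_assoc Aᵀ A,
      h A (by simp), one_mul, ih (fun B hB => h B (by simp [hB]))]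

lemma det_listProd_one (L : List (M d)) (h : ∀ A ∈ L, A.det = 1) :
    (L.prod).det = 1 := by
  induction L with
  | nil => simp
  | cons A t ih =>
    rw [List.prod_cons, Matrix.det_mul, h A (by simp), one_mul,
      ih (fun B hB => h B (by simp [hB]))]

lemma g_orth (k : Fin d) (η : ℕ → ℝ) (m : ℕ) (hkm : k.val < m) :
    (g k η m)ᵀ * g k η m = 1 := by
  unfold g
  by_cases h : m < d
  · rw [dif_pos h]
    have hne : k ≠ (⟨m, h⟩ : Fin d) := fun he => by
      have h2 : k.val = m := congrArg Fin.val he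
      omega
    rw [givens_transpose _ _ hne, givens_neg_mul _ _ hne]
  · rw [dif_neg h]; simp

lemma g_det (k : Fin d) (η : ℕ → ℝ) (m : ℕ) (hkm : k.val < m) :
    (g k η m).det = 1 := by
  unfold g
  by_cases h : m < d
  · rw [dif_pos h]
    exact givens_det _ _ (fun he => by
      have h2 : k.val = m := congrArg Fin.val he
      omega) _
  · rw [dif_neg h]; simp

lemma dprod_g_orth (k : Fin d) (η : ℕ → ℝ) (a b : ℕ) (hka : k.val < a) :
    (dprod (g k η) a b)ᵀ * dprod (g k η) a b = 1 := by
  apply orth_listProd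
  intro A hA
  rw [List.mem_map] at hA
  obtain ⟨m, hm, rfl⟩ := hA
  rw [List.mem_reverse] at hm
  exact g_orth k η m (by have := (mem_range'_lt hm).1; omega)

lemma dprod_g_det (k : Fin d) (η : ℕ → ℝ) (a b : ℕ) (hka : k.val < a) :
    (dprod (g k η) a b).det = 1 := by
  apply det_listProd_one
  intro A hA
  rw [List.mem_map] at hA
  obtain ⟨m, hm, rfl⟩ := hA
  rw [List.mem_reverse] at hm
  exact g_det k η m (by have := (mem_range'_lt hm).1; omega)

/-! ### choosing the sign correction -/

lemma fixBelow_diag (ε : Fin d → ℝ) (k : ℕ) (h : ∀ i : Fin d, i.val < k → ε i = 1) :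
    FixBelow (Matrix.diagonal ε) k := by
  intro a b hab
  rw [Matrix.diagonal_apply, Matrix.one_apply]
  by_cases he : a = b
  · rw [if_pos he, if_pos he, h a (by rcases hab with h1 | h1; exact h1; rwa [he])]
  · rw [if_neg he, if_neg he]

lemma prod_two_eq_one (σ : ℝ) (hσ : σ * σ = 1) (i0 i1 : Fin d) (h : i0 ≠ i1) :
    (∏ i, (if i = i0 ∨ i = i1 then σ else 1)) = 1 := by
  have hf : (fun i => if i = i0 ∨ i = i1 then σ else 1)
      = Function.update (Function.update (fun _ : Fin d => (1:ℝ)) i1 σ) i0 σ := by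
    funext i
    by_cases h0 : i = i0
    · simp [h0, Function.update]
    · by_cases h1 : i = i1 <;> simp [h0, h1, Function.update]
  rw [hf, Finset.prod_update_of_mem (Finset.mem_univ i0),
    Finset.prod_update_of_mem (by simp [Ne.symm h] : i1 ∈ Finset.univ \ {i0})]
  simp [hσ]

lemma exists_eps (k : Fin d) (hk1 : k.val + 1 < d) (V : M d) (hV : Vᵀ * V = 1)
    (hfix : FixBelow V k.val) :
    ∃ ε : Fin d → ℝ, IsSign ε ∧ (∀ i : Fin d, i.val < k.val → ε i = 1) ∧
      (∏ i, ε i) = 1 ∧ Good (V * Matrix.diagonal ε) k k.val := by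
  by_cases H : ∃ j : Fin d, k.val < j.val ∧ V k j ≠ 0
  · set S : Finset (Fin d) := Finset.univ.filter (fun j => k.val < j.val ∧ V k j ≠ 0)
      with hS
    have hSne : S.Nonempty := by
      obtain ⟨j, hj1, hj2⟩ := H
      exact ⟨j, by
        simp only [hS, Finset.mem_filter, Finset.mem_univ, true_and]
        exact ⟨hj1, hj2⟩⟩
    set jh := S.max' hSne with hjh
    have hjhmem : jh ∈ S := S.max'_mem hSne
    have hjh1 : k.val < jh.val := by
      have := hjhmem
      simp [hS] at this
      exact this.1
    have hjh2 : V k jh ≠ 0 := by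
      have := hjhmem
      simp [hS] at this
      exact this.2
    have hjhmax : ∀ j : Fin d, jh.val < j.val → V k j = 0 := by
      intro j hj
      by_contra hne
      have hjS : j ∈ S := by simp [hS]; exact ⟨by omega, hne⟩
      have := S.le_max' j hjS
      rw [← hjh] at this
      have : j.val ≤ jh.val := this
      omega
    set σ : ℝ := if 0 < V k jh then 1 else -1 with hσ
    have hσ2 : σ * σ = 1 := by
      by_cases h : 0 < V k jh <;> simp [hσ, h]
    have hσpos : 0 < V k jh * σ := by
      by_cases h : 0 < V k jh
      · simp only [hσ, if_pos h, mul_one]; exact h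
      · have : V k jh < 0 := lt_of_le_of_ne (le_of_not_gt h) hjh2
        simp only [hσ, if_neg h]
        nlinarith
    refine ⟨fun i => if i = jh ∨ i = k then σ else 1, ?_, ?_, ?_, ?_⟩
    · intro i
      dsimp only
      by_cases h : i = jh ∨ i = k
      · rw [if_pos h]
        by_cases h2 : 0 < V k jh <;> simp [hσ, h2]
      · rw [if_neg h]; exact Or.inl rfl
    · intro i hi
      have h1 : i ≠ jh := fun h => by rw [h] at hi; omega
      have h2 : i ≠ k := fun h => by rw [h] at hi; omega
      simp [h1, h2]
    · exact prod_two_eq_one σ hσ2 jh k (fun h => by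
        have := congrArg Fin.val h; omega)
    · refine Or.inr ⟨jh, hjh1, ?_, ?_⟩
      · rw [Matrix.mul_diagonal]
        simp only [true_or, if_pos]
        exact hσpos
      · intro j hj
        rw [Matrix.mul_diagonal, hjhmax j hj, zero_mul]
  · push_neg at H
    have hzrow : ∀ b : Fin d, b ≠ k → V k b = 0 := by
      intro b hb
      by_cases hbk : b.val < k.val
      · rw [hfix k b (Or.inr hbk), Matrix.one_apply_ne (Ne.symm hb)]
      · have : k.val < b.val := by
          rcases Nat.lt_or_ge k.val b.val with h | h
          · exact h
          · exact absurd (Fin.ext (by omega) : b = k) hb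
        exact H b this
    have hdiag : V k k * V k k = 1 := row_single_sq hV k k hzrow
    set σ : ℝ := V k k with hσ
    set jn : Fin d := ⟨k.val + 1, hk1⟩ with hjn
    have hjnv : jn.val = k.val + 1 := rfl
    have hkjn : k ≠ jn := fun h => by
      have h2 : k.val = jn.val := congrArg Fin.val h
      omega
    refine ⟨fun i => if i = k ∨ i = jn then σ else 1, ?_, ?_, ?_, ?_⟩
    · intro i
      dsimp only
      by_cases h : i = k ∨ i = jn
      · rw [if_pos h]
        have : (σ - 1) * (σ + 1) = 0 := by nlinarith
        rcases mul_eq_zero.mp this with h2 | h2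
        · left; linarith
        · right; linarith
      · rw [if_neg h]; exact Or.inl rfl
    · intro i hi
      have h1 : i ≠ k := fun h => by rw [h] at hi; omega
      have h2 : i ≠ jn := fun h => by
        have h3 : i.val = jn.val := congrArg Fin.val h
        omega
      simp [h1, h2]
    · exact prod_two_eq_one σ hdiag k jn hkjn
    · refine Or.inl ⟨?_, ?_⟩
      · intro j hj
        rw [Matrix.mul_diagonal, hzrow j (fun h => by rw [h] at hj; omega), zero_mul]
      · rw [Matrix.mul_diagonal]
        simp only [true_or, if_pos]
        rw [← hσ]
        nlinarith
/-! ### the main induction -/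

noncomputable def Qb (θ : Fin d → Fin d → ℝ) (m : ℕ) : M d :=
  if h : m < d then Qmat d θ ⟨m, h⟩ else 1

lemma Umat_eq' (θ : Fin d → Fin d → ℝ) : Umat d θ = dprod (Qb θ) 0 d := by
  rw [Umat_eq]; rfl

lemma Qmat_congr_row (θ₁ θ₂ : Fin d → Fin d → ℝ) (k : Fin d)
    (h : ∀ j, θ₁ k j = θ₂ k j) : Qmat d θ₁ k = Qmat d θ₂ k := by
  unfold Qmat
  congr 1
  apply List.map_congr_left
  intro j _
  rw [h j]

lemma main_ind : ∀ r : ℕ, ∀ k : ℕ, k + r = d → 1 ≤ k →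
    ∀ V : M d, Vᵀ * V = 1 → V.det = 1 → FixBelow V k →
    ∃ θ : Fin d → Fin d → ℝ,
      (∀ i j : Fin d, k ≤ i.val → i < j → 0 ≤ θ i j ∧ θ i j < Real.pi) ∧
      (∀ i j : Fin d, ¬(k ≤ i.val ∧ i < j) → θ i j = 0) ∧
      ∃ ε : Fin d → ℝ, IsSign ε ∧ (∀ i : Fin d, i.val < k → ε i = 1) ∧
        (∏ i, ε i) = 1 ∧ V * Matrix.diagonal ε = dprod (Qb θ) k d := by
  intro r
  induction r with
  | zero =>
    intro k hk hk1 V hV hdet hfix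
    have hV1 : V = 1 := by
      ext a b
      exact hfix a b (Or.inl (by omega))
    refine ⟨fun _ _ => 0, by intro i j hi _; have := i.isLt; omega,
      fun _ _ _ => rfl, fun _ => 1, isSign_one, fun _ _ => rfl,
      Finset.prod_const_one, ?_⟩
    rw [Matrix.diagonal_one, mul_one, hV1, dprod_self _ _ _ (by omega)]
  | succ n ih =>
    intro k hk hk1 V hV hdet hfix
    have hkd : k < d := by omega
    set kf : Fin d := ⟨k, hkd⟩ with hkf
    have hkfv : kf.val = k := rfl
    by_cases hn : n = 0
    · -- k = d - 1 : here V must be the identity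
      have hkd1 : k + 1 = d := by omega
      have hzero : ∀ a b : Fin d, a ≠ b → V a b = 0 := by
        intro a b hab
        by_cases ha : a.val < k
        · rw [hfix a b (Or.inl ha), Matrix.one_apply_ne hab]
        · have hbk : b.val < k := by
            have ha' := a.isLt
            have hb' := b.isLt
            by_contra hbb
            exact hab (Fin.ext (by omega))
          rw [hfix a b (Or.inr hbk), Matrix.one_apply_ne hab]
      have hdiag1 : ∀ a : Fin d, a ≠ kf → V a a = 1 := by
        intro a ha
        have ha1 : a.val < k := by
          have := a.isLt
          by_contra hc
          exact ha (Fin.ext (by omega))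
        rw [hfix a a (Or.inl ha1), Matrix.one_apply_eq]
      have hVdiag : V = Matrix.diagonal
          (Function.update (fun _ : Fin d => (1:ℝ)) kf (V kf kf)) := by
        ext a b
        rw [Matrix.diagonal_apply]
        by_cases hab : a = b
        · rw [if_pos hab, ← hab]
          by_cases hak : a = kf
          · rw [hak, Function.update_self]
          · rw [Function.update_of_ne hak, hdiag1 a hak]
        · rw [if_neg hab, hzero a b hab]
      have hdet2 : V kf kf = 1 := by
        have := hdet
        rw [hVdiag, Matrix.det_diagonal,
          Finset.prod_update_of_mem (Finset.mem_univ kf)] at this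
        simpa using this
      have hV1 : V = 1 := by
        rw [hVdiag, hdet2]
        have : Function.update (fun _ : Fin d => (1:ℝ)) kf 1 = fun _ => (1:ℝ) := by
          funext i
          by_cases h : i = kf <;> simp [h]
        rw [this, Matrix.diagonal_one]
      refine ⟨fun _ _ => 0, fun _ _ _ _ => ⟨le_refl 0, Real.pi_pos⟩,
        fun _ _ _ => rfl, fun _ => 1, isSign_one, fun _ _ => rfl,
        Finset.prod_const_one, ?_⟩
      rw [Matrix.diagonal_one, mul_one, hV1, dprod_lo _ _ _ hkd,
        dprod_self _ _ _ (by omega), one_mul]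
      have : Qb (fun _ _ => (0:ℝ)) k = Qmat d (fun _ _ => (0:ℝ)) kf := by
        simp [Qb, hkd]; rfl
      rw [this, Qmat_eq, dprod_self _ _ _ (by omega)]
    · -- main step
      have hk1d : kf.val + 1 < d := by omega
      obtain ⟨ε₀, hsign₀, hbelow₀, hprod₀, hgood⟩ := exists_eps kf hk1d V hV hfix
      set V₁ := V * Matrix.diagonal ε₀ with hV₁
      have horth₁ : V₁ᵀ * V₁ = 1 := by
        rw [hV₁, Matrix.transpose_mul, mul_assoc, ← mul_assoc Vᵀ V, hV, one_mul,
          diag_orth hsign₀]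
      have hdet₁ : V₁.det = 1 := by
        rw [hV₁, Matrix.det_mul, hdet, Matrix.det_diagonal, hprod₀, one_mul]
      have hfix₁ : FixBelow V₁ k := fixBelow_mul hfix (fixBelow_diag ε₀ k hbelow₀)
      obtain ⟨η, hηr, W, hW1, hW2, hW3, hWeq⟩ :=
        res_half kf n k (by omega) (le_refl k) V₁ horth₁ hdet₁ hfix₁
          (fun j h1 h2 => by omega) hgood
      obtain ⟨θ', hr1, hr0, ε₁, hsign₁, hbelow₁, hprod₁, heq₁⟩ :=
        ih (k+1) (by omega) (by omega) W hW1 hW2 hW3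
      -- commute the sign diagonal through the row-k product
      set L : List ℕ := (List.range' (k+1) (d-(k+1))).reverse with hL
      have hLmem : ∀ m ∈ L, kf.val < m ∧ m < d := by
        intro m hm
        rw [hL, List.mem_reverse, List.mem_range'_1] at hm
        omega
      have hLnd : L.Nodup := by
        rw [hL, List.nodup_reverse]
        exact List.nodup_range' (s := _) (n := _)
      have hLη : ∀ m ∈ L, 0 ≤ η m ∧ η m < Real.pi := by
        intro m hm
        rw [hL, List.mem_reverse, List.mem_range'_1] at hm
        exact hηr m (by omega) (by omega)
      obtain ⟨η₂, ε₂, hη₂r, hsign₂, hprod₂, hpres₂, heq₂⟩ :=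
        diag_mul_prod_swap kf L hLmem hLnd η hLη ε₁ hsign₁
      -- assemble the angles
      set θf : Fin d → Fin d → ℝ :=
        fun i j => if i.val = k ∧ i < j then η₂ j.val else θ' i j with hθf
      have hθfval : ∀ (i j : Fin d),
          θf i j = if i.val = k ∧ i < j then η₂ j.val else θ' i j := by
        intro i j
        rw [hθf]
      have hWeq' : W = dprod (Qb θ') (k+1) d * Matrix.diagonal ε₁ := by
        rw [← heq₁, mul_assoc, diag_sq hsign₁, mul_one]
      have hPdef : dprod (g kf η) (k+1) d = (L.map (g kf η)).prod := rfl
      have hP₂def : dprod (g kf η₂) (k+1) d = (L.map (g kf η₂)).prod := rfl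
      have hchain : V * Matrix.diagonal (fun i => ε₀ i * ε₂ i)
          = dprod (Qb θ') (k+1) d * dprod (g kf η₂) (k+1) d := by
        have h1 : V * Matrix.diagonal ε₀ = dprod (Qb θ') (k+1) d *
            (dprod (g kf η₂) (k+1) d * Matrix.diagonal ε₂) := by
          rw [← hV₁, hWeq, hWeq', mul_assoc, hPdef, heq₂, hP₂def]
        have h2 : V * Matrix.diagonal ε₀ * Matrix.diagonal ε₂
            = dprod (Qb θ') (k+1) d * dprod (g kf η₂) (k+1) d := by
          rw [h1, mul_assoc, mul_assoc, diag_sq hsign₂, mul_one]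
        rw [← h2, mul_assoc, Matrix.diagonal_mul_diagonal]
      have hQbk : Qb θf k = dprod (g kf η₂) (k+1) d := by
        have h1 : Qb θf k = Qmat d θf kf := by simp [Qb, hkd]; rfl
        rw [h1, Qmat_eq]
        apply dprod_congr
        intro m hm1 hm2
        unfold g rowη
        rw [dif_pos hm2, dif_pos hm2]
        congr 1
        have hlt : kf < (⟨m, hm2⟩ : Fin d) := by
          rw [Fin.mk_lt_mk]
          omega
        rw [hθfval kf ⟨m, hm2⟩, if_pos ⟨rfl, hlt⟩]
        rw [dif_pos hm2]
      have hQbrest : dprod (Qb θf) (k+1) d = dprod (Qb θ') (k+1) d := by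
        apply dprod_congr
        intro m hm1 hm2
        unfold Qb
        rw [dif_pos hm2, dif_pos hm2]
        apply Qmat_congr_row
        intro j
        rw [hθfval ⟨m, hm2⟩ j, if_neg (fun hc => by
          have h3 : m = k := hc.1
          omega)]
      refine ⟨θf, ?_, ?_, fun i => ε₀ i * ε₂ i, ?_, ?_, ?_, ?_⟩
      · intro i j hi hij
        rw [hθfval i j]
        by_cases hik : i.val = k
        · have hjk : k < j.val := by
            have := (Fin.lt_def.mp hij)
            omega
          simp only [hik, hij, and_self, if_pos]
          apply hη₂r
          rw [hL, List.mem_reverse, List.mem_range'_1]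
          have := j.isLt
          omega
        · simp only [hik, false_and, if_neg, not_false_iff]
          exact hr1 i j (by omega) hij
      · intro i j hij
        rw [hθfval i j]
        by_cases hik : i.val = k ∧ i < j
        · exfalso
          exact hij ⟨by omega, hik.2⟩
        · rw [if_neg hik]
          apply hr0
          intro hc
          exact hij ⟨by omega, hc.2⟩
      · intro i
        dsimp only
        rcases hsign₀ i with h0 | h0 <;> rcases hsign₂ i with h2 | h2 <;>
          rw [h0, h2] <;> norm_num
      · intro i hi
        dsimp only
        rw [hbelow₀ i hi, hpres₂ i (by rw [hkfv]; omega), hbelow₁ i (by omega), one_mul]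
      · dsimp only
        rw [Finset.prod_mul_distrib, hprod₀, hprod₂, hprod₁, one_mul]
      · rw [hchain, dprod_lo _ _ _ hkd, hQbk, hQbrest]
end GA

/-- every real `d×d` special orthogonal matrix `U` (i.e. `UᵀU = I` and
`det U = 1`, `d ≥ 2`) can be written as the ordered product of Givens rotations
`U = U(θ) = Q^{d−1}(θ)·Q^{d−2}(θ)···Q^1(θ)` for some family of angles `θ ∈ Θ`. -/
theorem specialOrthogonal_eq_givens_product (d : ℕ) (hd : 2 ≤ d)
    (U : Matrix (Fin d) (Fin d) ℝ) (hU : U.transpose * U = 1) (hdet : U.det = 1) :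
    ∃ θ : Fin d → Fin d → ℝ, memTheta d θ ∧ U = Umat d θ := by
  have hd0 : 0 < d := by omega
  set k0 : Fin d := ⟨0, hd0⟩ with hk0def
  have hk0v : k0.val = 0 := rfl
  obtain ⟨η₀, hη₀r, W, hW1, hW2, hW3, hUeq⟩ :=
    GA.res_full k0 rfl hd (d-1) 0 (by omega) U hU hdet
      (fun j h1 h2 => by omega) (fun h => absurd h (lt_irrefl 0))
  obtain ⟨θ', hr1, hr0, ε₁, hsign₁, hbelow₁, hprod₁, heq₁⟩ :=
    GA.main_ind (d-1) 1 (by omega) (le_refl 1) W hW1 hW2 hW3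
  set P₀ := GA.dprod (GA.g k0 η₀) 1 d with hP₀
  set R := Matrix.diagonal ε₁ * P₀ with hR
  have hP₀orth : P₀ᵀ * P₀ = 1 := GA.dprod_g_orth k0 η₀ 1 d (by omega)
  have hP₀det : P₀.det = 1 := GA.dprod_g_det k0 η₀ 1 d (by omega)
  have hRorth : Rᵀ * R = 1 := by
    rw [hR, Matrix.transpose_mul, mul_assoc, ← mul_assoc (Matrix.diagonal ε₁)ᵀ,
      GA.diag_orth hsign₁, one_mul, hP₀orth]
  have hRdet : R.det = 1 := by
    rw [hR, Matrix.det_mul, Matrix.det_diagonal, hprod₁, one_mul, hP₀det]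
  have hpw : ((List.range' 1 (d-1)).reverse).Pairwise (· > ·) := by
    rw [List.pairwise_reverse]
    exact List.pairwise_lt_range' (s := 1) (n := d-1)
  have hmem : ∀ m ∈ (List.range' 1 (d-1)).reverse, 0 < m ∧ m < d := by
    intro m hm
    rw [List.mem_reverse, List.mem_range'_1] at hm
    omega
  obtain ⟨_, _, C1⟩ := GA.row0_pattern k0 rfl _ hpw hmem η₀
  have hP₀pat : ∀ a b : Fin d, 1 ≤ a.val → a.val < b.val → P₀ a b = 0 := by
    intro a b h1 h2
    exact C1 a b (by omega) h2
  obtain ⟨η₁, hη₁r, hReq⟩ :=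
    GA.image_row0 k0 rfl (d-1) 1 (by omega) (le_refl 1) R hRorth hRdet
      (fun a h1 h2 => by omega)
      (fun a b h1 h2 => by
        rw [hR, Matrix.diagonal_mul, hP₀pat a b h1 h2, mul_zero])
  set θf : Fin d → Fin d → ℝ :=
    fun i j => if i.val = 0 ∧ i < j then η₁ j.val else θ' i j with hθf
  have hθfval : ∀ (i j : Fin d),
      θf i j = if i.val = 0 ∧ i < j then η₁ j.val else θ' i j := by
    intro i j
    rw [hθf]
  have hWeq' : W = GA.dprod (GA.Qb θ') 1 d * Matrix.diagonal ε₁ := by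
    rw [← heq₁, mul_assoc, GA.diag_sq hsign₁, mul_one]
  have hQb0 : GA.Qb θf 0 = GA.dprod (GA.g k0 η₁) 1 d := by
    have h1 : GA.Qb θf 0 = Qmat d θf k0 := by simp [GA.Qb, hd0]; rfl
    rw [h1, GA.Qmat_eq]
    apply GA.dprod_congr
    intro m hm1 hm2
    unfold GA.g GA.rowη
    rw [dif_pos hm2, dif_pos hm2]
    congr 1
    have hlt : k0 < (⟨m, hm2⟩ : Fin d) := by
      rw [Fin.mk_lt_mk]
      omega
    rw [hθfval k0 ⟨m, hm2⟩, if_pos ⟨rfl, hlt⟩]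
    rw [dif_pos hm2]
  have hQbrest : GA.dprod (GA.Qb θf) 1 d = GA.dprod (GA.Qb θ') 1 d := by
    apply GA.dprod_congr
    intro m hm1 hm2
    unfold GA.Qb
    rw [dif_pos hm2, dif_pos hm2]
    apply GA.Qmat_congr_row
    intro j
    rw [hθfval ⟨m, hm2⟩ j, if_neg (fun hc => by
      have h3 : m = 0 := hc.1
      omega)]
  refine ⟨θf, ?_, ?_⟩
  · intro i j
    constructor
    · intro hij
      rw [hθfval i j]
      by_cases hi0 : i.val = 0
      · have hj1 : 1 ≤ j.val := by
          have := Fin.lt_def.mp hij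
          omega
        rw [if_pos ⟨hi0, hij⟩, if_pos hi0]
        exact hη₁r j.val hj1 j.isLt
      · rw [if_neg (fun hc => hi0 hc.1), if_neg hi0]
        exact hr1 i j (by omega) hij
    · intro hij
      rw [hθfval i j, if_neg (fun hc => hij hc.2)]
      exact hr0 i j (fun hc => hij hc.2)
  · rw [GA.Umat_eq']
    calc U = W * P₀ := hUeq
      _ = (GA.dprod (GA.Qb θ') 1 d * Matrix.diagonal ε₁) * P₀ := by rw [← hWeq']
      _ = GA.dprod (GA.Qb θ') 1 d * R := by rw [mul_assoc, ← hR]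
      _ = GA.dprod (GA.Qb θ') 1 d * GA.dprod (GA.g k0 η₁) 1 d := by rw [hReq]
      _ = GA.dprod (GA.Qb θf) 1 d * GA.Qb θf 0 := by rw [hQb0, hQbrest]
      _ = GA.dprod (GA.Qb θf) 0 d := (GA.dprod_lo _ _ _ (by omega)).symm
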